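/- Every generalised ray R is flasque; indeed the map τ : R → R given by τ(x) = x + 1 witnesses flasqueness. -/

import Mathlib

open scoped NNReal

namespace CoarsePaper

variable {X Y : Type*}

/-- Composition `M N = {(x,z) | ∃ y, (x,y) ∈ M ∧ (y,z) ∈ N}` of subsets of `X × X`. -/
def Comp (M N : Set (X × X)) : Set (X × X) :=
  {p | ∃ y, (p.1, y) ∈ M ∧ (y, p.2) ∈ N}

/-- A collection `c` of subsets of `X × X` (the *controlled sets*) is a coarse structure
if it contains the diagonal and is closed under subsets, finite unions, reflection in the
diagonal, and composition. -/
structure IsCoarseStructure (c : Set (Set (X × X))) : Prop where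
  diag_mem : Set.diagonal X ∈ c
  subset_mem : ∀ ⦃M N : Set (X × X)⦄, M ∈ c → N ⊆ M → N ∈ c
  union_mem : ∀ ⦃M N : Set (X × X)⦄, M ∈ c → N ∈ c → M ∪ N ∈ c
  swap_mem : ∀ ⦃M : Set (X × X)⦄, M ∈ c → Prod.swap '' M ∈ c
  comp_mem : ∀ ⦃M N : Set (X × X)⦄, M ∈ c → N ∈ c → Comp M N ∈ c

/-- A set `B ⊆ X` is bounded if `B = M_x = {y | (x,y) ∈ M}` for some controlled `M` and
some point `x`. -/
def IsBounded (c : Set (Set (X × X))) (B : Set X) : Prop :=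
  ∃ M ∈ c, ∃ x : X, B = {y | (x, y) ∈ M}

/-- Two maps `f g : S → X` into a coarse space are close if `{(f s, g s) | s ∈ S}` is
controlled. -/
def Close {S : Type*} (c : Set (Set (X × X))) (f g : S → X) : Prop :=
  {p : X × X | ∃ s, p = (f s, g s)} ∈ c

/-- A map between coarse spaces is a coarse map if images of controlled sets are controlled
and preimages of bounded sets are bounded. -/
def IsCoarseMap (cX : Set (Set (X × X))) (cY : Set (Set (Y × Y))) (f : X → Y) : Prop :=
  (∀ M ∈ cX, (fun p : X × X => (f p.1, f p.2)) '' M ∈ cY) ∧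
    ∀ B : Set Y, IsBounded cY B → IsBounded cX (f ⁻¹' B)

/-- A coarse structure on a topological space is compatible with the topology if every
controlled set is contained in an open controlled set and the closure of every bounded set
is compact. -/
def Compatible [TopologicalSpace X] (c : Set (Set (X × X))) : Prop :=
  (∀ M ∈ c, ∃ U ∈ c, IsOpen U ∧ M ⊆ U) ∧
    ∀ B : Set X, IsBounded c B → IsCompact (closure B)

/-- The coarse structure on the space `[0,∞) = ℝ≥0` making it a generalised ray:
a coarse structure compatible with the topology, closed under sums `M + N`, under the
squeezing operation `Mˢ`, and under translations `a + M`. -/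
structure IsGeneralisedRay (c : Set (Set (ℝ≥0 × ℝ≥0))) : Prop where
  coarse : IsCoarseStructure c
  compatible : Compatible c
  sum_mem : ∀ ⦃M N : Set (ℝ≥0 × ℝ≥0)⦄, M ∈ c → N ∈ c →
    {p : ℝ≥0 × ℝ≥0 | ∃ u v x y, (u, v) ∈ M ∧ (x, y) ∈ N ∧ p = (u + x, v + y)} ∈ c
  squeeze_mem : ∀ ⦃M : Set (ℝ≥0 × ℝ≥0)⦄, M ∈ c →
    {p : ℝ≥0 × ℝ≥0 | ∃ x y, (x, y) ∈ M ∧ x ≤ p.1 ∧ p.1 ≤ y ∧ x ≤ p.2 ∧ p.2 ≤ y} ∈ c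
  translate_mem : ∀ (a : ℝ≥0) ⦃M : Set (ℝ≥0 × ℝ≥0)⦄, M ∈ c →
    {p : ℝ≥0 × ℝ≥0 | ∃ x y, (x, y) ∈ M ∧ p = (a + x, a + y)} ∈ c

/-- The bounded coarse structure of a (pseudo)metric space: a set is controlled iff it is
contained in some neighbourhood of the diagonal `{(x,y) | dist x y < r}`, `r > 0`. -/
def metricC (X : Type*) [PseudoMetricSpace X] : Set (Set (X × X)) :=
  {M | ∃ r : ℝ, 0 < r ∧ M ⊆ {p : X × X | dist p.1 p.2 < r}}

/-- The map `τ : X → X` witnesses flasqueness of the coarse space `(X, c)`: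
the iterated images `τⁿ[X]` eventually miss every bounded set, the union
`⋃ₙ (τ × τ)ⁿ[M]` of iterated images of any controlled set is controlled, and `τ` is close
to the identity. -/
def FlasqueWitness (c : Set (Set (X × X))) (τ : X → X) : Prop :=
  (∀ B : Set X, IsBounded c B → ∃ N : ℕ, ∀ n ≥ N, Set.range τ^[n] ∩ B = ∅) ∧
    (∀ M ∈ c, (⋃ n : ℕ, (Prod.map τ τ)^[n] '' M) ∈ c) ∧
    Close c τ (id : X → X)

/-- A coarse space is flasque if some map witnesses flasqueness. -/
def IsFlasque (c : Set (Set (X × X))) : Prop :=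
  ∃ τ : X → X, FlasqueWitness c τ

lemma iter_add_one (n : ℕ) (x : ℝ≥0) : (fun x : ℝ≥0 => x + 1)^[n] x = x + n := by
  induction n with
  | zero => simp
  | succ k ih =>
      rw [Function.iterate_succ_apply', ih]
      push_cast
      ring

lemma iter_map_add_one (n : ℕ) (q : ℝ≥0 × ℝ≥0) :
    (Prod.map (fun x : ℝ≥0 => x + 1) (fun x : ℝ≥0 => x + 1))^[n] q = (q.1 + n, q.2 + n) := by
  induction n with
  | zero => simp
  | succ k ih =>
      rw [Function.iterate_succ_apply', ih]
      simp only [Prod.map_apply]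
      rw [Prod.mk.injEq]
      push_cast
      constructor <;> ring

lemma exists_zero_mul_mem (c : Set (Set (ℝ≥0 × ℝ≥0))) (hc : IsGeneralisedRay c)
    {δ : ℝ≥0} {N₀ : Set (ℝ≥0 × ℝ≥0)} (hN₀ : N₀ ∈ c) (hδ : ((0 : ℝ≥0), δ) ∈ N₀) :
    ∀ k : ℕ, ∃ M ∈ c, ((0 : ℝ≥0), (k : ℝ≥0) * δ) ∈ M := by
  intro k
  induction k with
  | zero =>
      exact ⟨Set.diagonal ℝ≥0, hc.coarse.diag_mem, by simp [Set.mem_diagonal_iff]⟩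
  | succ m ih =>
      obtain ⟨M, hM, hmem⟩ := ih
      refine ⟨_, hc.sum_mem hM hN₀, ?_⟩
      refine ⟨0, (m : ℝ≥0) * δ, 0, δ, hmem, hδ, ?_⟩
      push_cast
      rw [Prod.mk.injEq]
      constructor
      · simp
      · ring

/-- Every generalised ray is flasque; indeed `τ(x) = x + 1` witnesses
flasqueness. -/
theorem generalisedRay_flasque
    (c : Set (Set (ℝ≥0 × ℝ≥0))) (hc : IsGeneralisedRay c) :
    IsFlasque c ∧ FlasqueWitness c (fun x : ℝ≥0 => x + 1) := by
  suffices h : FlasqueWitness c (fun x : ℝ≥0 => x + 1) from ⟨⟨_, h⟩, h⟩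
  refine ⟨?_, ?_, ?_⟩
  · -- iterated images miss bounded sets
    intro B hB
    have hcl : IsCompact (closure B) := hc.compatible.2 B hB
    obtain ⟨C, hC⟩ := hcl.bddAbove
    refine ⟨⌊C⌋₊ + 1, fun n hn => ?_⟩
    ext y
    simp only [Set.mem_inter_iff, Set.mem_empty_iff_false, iff_false, not_and]
    rintro ⟨x, rfl⟩ hyB
    have hle : (fun x : ℝ≥0 => x + 1)^[n] x ≤ C := hC (subset_closure hyB)
    rw [iter_add_one] at hle
    have h1 : C < ((⌊C⌋₊ + 1 : ℕ) : ℝ≥0) := by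
      push_cast
      exact Nat.lt_floor_add_one C
    have h2 : ((⌊C⌋₊ + 1 : ℕ) : ℝ≥0) ≤ (n : ℝ≥0) := Nat.cast_le.mpr hn
    have h3 : (n : ℝ≥0) ≤ x + n := le_add_self
    exact absurd hle (not_le.mpr (h1.trans_le (h2.trans h3)))
  · -- union of iterated images of a controlled set is controlled
    intro M hM
    refine hc.coarse.subset_mem (hc.sum_mem hM hc.coarse.diag_mem) ?_
    rintro p hp
    simp only [Set.mem_iUnion, Set.mem_image] at hp
    obtain ⟨n, q, hqM, rfl⟩ := hp
    rw [iter_map_add_one]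
    exact ⟨q.1, q.2, (n : ℝ≥0), (n : ℝ≥0), hqM, rfl, rfl⟩
  · -- τ is close to the identity
    obtain ⟨U, hU, hUopen, hdiagU⟩ := hc.compatible.1 _ hc.coarse.diag_mem
    have h00 : ((0 : ℝ≥0), (0 : ℝ≥0)) ∈ U := hdiagU rfl
    have hcont : Continuous fun t : ℝ≥0 => ((0 : ℝ≥0), t) := by continuity
    have hnhds : (fun t : ℝ≥0 => ((0 : ℝ≥0), t)) ⁻¹' U ∈ nhds (0 : ℝ≥0) :=
      hcont.continuousAt.preimage_mem_nhds (hUopen.mem_nhds h00)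
    obtain ⟨ε, hε, hball⟩ := Metric.mem_nhds_iff.mp hnhds
    set δ : ℝ≥0 := ⟨ε / 2, by positivity⟩ with hδdef
    have hδpos : 0 < δ := by
      rw [← NNReal.coe_lt_coe]
      exact half_pos hε
    have hδU : ((0 : ℝ≥0), δ) ∈ U := by
      apply hball
      simp only [Metric.mem_ball, NNReal.dist_eq, hδdef]
      show |ε / 2 - ((0 : ℝ≥0) : ℝ)| < ε
      rw [NNReal.coe_zero, sub_zero, abs_of_nonneg (by positivity)]
      linarith
    -- find a controlled set containing (0, r) with 1 ≤ r
    obtain ⟨k, hk⟩ := exists_nat_ge (δ⁻¹ : ℝ≥0)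
    obtain ⟨M, hM, hmem⟩ := exists_zero_mul_mem c hc hU hδU k
    have hr : (1 : ℝ≥0) ≤ (k : ℝ≥0) * δ := by
      rw [← inv_mul_cancel₀ hδpos.ne']
      exact mul_le_mul_left hk δ
    set r : ℝ≥0 := (k : ℝ≥0) * δ
    -- Δ + M is controlled and contains (x, x + r) for every x
    have hM1 := hc.sum_mem hc.coarse.diag_mem hM
    -- squeeze it
    have hS := hc.squeeze_mem hM1
    refine hc.coarse.subset_mem hS ?_
    rintro p ⟨s, rfl⟩
    refine ⟨s, s + r, ⟨s, s, 0, r, rfl, hmem, by simp⟩, ?_, ?_, ?_, ?_⟩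
    · exact le_self_add
    · exact add_le_add_right hr s
    · exact le_refl s
    · exact le_self_add

end CoarsePaper
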